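/- For every integer m ≥ 1, the formula ‖x‖ = sup_n |(H^(m)x)_n| defines a norm on each of the spaces h_0(Δ^(m)), h_c(Δ^(m)) and h_∞(Δ^(m)) (in particular ‖x‖ = 0 implies x = 0), each of these spaces is complete in this norm, and for each fixed index n the coordinate functional x ↦ x_n is continuous on each of them; that is, they are BK-spaces. -/
import Mathlib


open Filter Finset Topology

/- Real sequences are modelled as functions `ℕ → ℝ`, where the Lean index `n : ℕ`
corresponds to the paper's index `n + 1` (the paper indexes sequences by `k ≥ 1`).
Thus the paper's entry `h_{nk} = ∑_{i=k}^{n} (-1)^{i-k} C(m, i-k) / (n+i-1)`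
(for `1 ≤ k ≤ n`) becomes, with 0-based indices,
`hMat m n k = ∑_{i ∈ Icc k n} (-1)^{i-k} C(m, i-k) / (n+i+1)`. -/

/-- The entries of the triangle matrix `H^(m) = H Δ^(m)` (0-based indexing). -/
noncomputable def hMat (m n k : ℕ) : ℝ :=
  ∑ i ∈ Finset.Icc k n, (-1 : ℝ) ^ (i - k) * (Nat.choose m (i - k) : ℝ) / ((n + i + 1 : ℕ) : ℝ)

/-- The `H^(m)`-transform of a sequence: `(H^(m) x)_n = ∑_{k=1}^{n} h_{nk} x_k`. -/
noncomputable def hTrans (m : ℕ) (x : ℕ → ℝ) (n : ℕ) : ℝ :=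
  ∑ k ∈ Finset.range (n + 1), hMat m n k * x k

/-- `h_0(Δ^(m))`: sequences whose `H^(m)`-transform tends to `0`. -/
def hZero (m : ℕ) : Set (ℕ → ℝ) := {x | Tendsto (hTrans m x) atTop (𝓝 0)}

/-- `h_c(Δ^(m))`: sequences whose `H^(m)`-transform converges. -/
def hConv (m : ℕ) : Set (ℕ → ℝ) := {x | ∃ L : ℝ, Tendsto (hTrans m x) atTop (𝓝 L)}

/-- `h_∞(Δ^(m))`: sequences whose `H^(m)`-transform is bounded. -/
def hBdd (m : ℕ) : Set (ℕ → ℝ) := {x | ∃ M : ℝ, ∀ n, |hTrans m x n| ≤ M}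

/-- The space `c₀` of null real sequences. -/
def c0Seq : Set (ℕ → ℝ) := {y | Tendsto y atTop (𝓝 0)}

/-- The space `c` of convergent real sequences. -/
def cSeq : Set (ℕ → ℝ) := {y | ∃ L : ℝ, Tendsto y atTop (𝓝 L)}

/-- The space `ℓ∞` of bounded real sequences. -/
def linfSeq : Set (ℕ → ℝ) := {y | ∃ M : ℝ, ∀ n, |y n| ≤ M}

/-- The sup norm `‖y‖ = sup_n |y_n|` of a sequence. -/
noncomputable def supNorm (y : ℕ → ℝ) : ℝ := ⨆ n, |y n|

/-- The norm `‖x‖ = sup_n |(H^(m) x)_n|` on the Hilbert difference sequence spaces. -/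
noncomputable def hNorm (m : ℕ) (x : ℕ → ℝ) : ℝ := supNorm (hTrans m x)

/-- `S` is a BK-space with norm `N`: `N` is a norm on `S` (in particular `N x = 0 → x = 0`),
`S` is complete in the induced metric, and each coordinate functional `x ↦ x n` is
continuous on `S` (equivalently, bounded for the norm). -/
def IsBKSpace (S : Set (ℕ → ℝ)) (N : (ℕ → ℝ) → ℝ) : Prop :=
  (∀ x ∈ S, 0 ≤ N x) ∧
  (∀ x ∈ S, N x = 0 → x = 0) ∧
  (∀ x ∈ S, ∀ a : ℝ, N (a • x) = |a| * N x) ∧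
  (∀ x ∈ S, ∀ y ∈ S, N (x + y) ≤ N x + N y) ∧
  (∀ u : ℕ → (ℕ → ℝ), (∀ i, u i ∈ S) →
    (∀ ε : ℝ, 0 < ε → ∃ I : ℕ, ∀ p ≥ I, ∀ q ≥ I, N (u p - u q) < ε) →
    ∃ x ∈ S, Tendsto (fun i => N (u i - x)) atTop (𝓝 0)) ∧
  (∀ n : ℕ, ∃ C : ℝ, ∀ x ∈ S, |x n| ≤ C * N x)



section HilbertAux

lemma hMat_diag (m n : ℕ) : hMat m n n = 1 / ((n + n + 1 : ℕ) : ℝ) := by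
  unfold hMat
  rw [Finset.Icc_self, Finset.sum_singleton]
  simp

lemma hMat_diag_pos (m n : ℕ) : 0 < hMat m n n := by
  rw [hMat_diag]; positivity

noncomputable def invSeq (m : ℕ) (y : ℕ → ℝ) : ℕ → ℝ
  | n => (y n - ∑ k ∈ (Finset.range n).attach, hMat m n k.1 * invSeq m y k.1) / hMat m n n
  decreasing_by exact Finset.mem_range.mp k.2

lemma invSeq_eq (m : ℕ) (y : ℕ → ℝ) (n : ℕ) :
    invSeq m y n = (y n - ∑ k ∈ Finset.range n, hMat m n k * invSeq m y k) / hMat m n n := by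
  rw [invSeq]
  congr 2
  exact Finset.sum_attach _ (fun k => hMat m n k * invSeq m y k)

lemma hTrans_invSeq (m : ℕ) (y : ℕ → ℝ) : hTrans m (invSeq m y) = y := by
  funext n
  unfold hTrans
  rw [Finset.sum_range_succ, invSeq_eq, mul_div_cancel₀ _ (hMat_diag_pos m n).ne']
  ring

lemma hTrans_zero_eq (m : ℕ) (x : ℕ → ℝ) (h : ∀ n, hTrans m x n = 0) : x = 0 := by
  funext n
  induction n using Nat.strong_induction_on with
  | _ n ih =>
    have h0 := h n
    rw [hTrans, Finset.sum_range_succ] at h0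
    have hz : ∑ k ∈ Finset.range n, hMat m n k * x k = 0 :=
      Finset.sum_eq_zero fun k hk => by rw [ih k (Finset.mem_range.mp hk)]; simp
    rw [hz, zero_add] at h0
    have := (mul_eq_zero.mp h0).resolve_left (hMat_diag_pos m n).ne'
    simpa using this

lemma hTrans_add (m : ℕ) (x y : ℕ → ℝ) (n : ℕ) :
    hTrans m (x + y) n = hTrans m x n + hTrans m y n := by
  simp [hTrans, Pi.add_apply, mul_add, Finset.sum_add_distrib]

lemma hTrans_sub (m : ℕ) (x y : ℕ → ℝ) (n : ℕ) :
    hTrans m (x - y) n = hTrans m x n - hTrans m y n := by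
  simp [hTrans, Pi.sub_apply, mul_sub, Finset.sum_sub_distrib]

lemma hTrans_smul (m : ℕ) (x : ℕ → ℝ) (a : ℝ) (n : ℕ) :
    hTrans m (a • x) n = a * hTrans m x n := by
  simp only [hTrans, Pi.smul_apply, smul_eq_mul, Finset.mul_sum]
  exact Finset.sum_congr rfl fun k _ => by ring


lemma supNorm_nonneg (y : ℕ → ℝ) : 0 ≤ supNorm y :=
  Real.iSup_nonneg fun n => abs_nonneg _

lemma le_supNorm {y : ℕ → ℝ} (h : ∃ M, ∀ n, |y n| ≤ M) (n : ℕ) : |y n| ≤ supNorm y := by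
  obtain ⟨M, hM⟩ := h
  exact le_ciSup ⟨M, by rintro _ ⟨k, rfl⟩; exact hM k⟩ n

lemma supNorm_le {y : ℕ → ℝ} {M : ℝ} (h : ∀ n, |y n| ≤ M) : supNorm y ≤ M := ciSup_le h

lemma bdd_of_tendsto {y : ℕ → ℝ} {L : ℝ} (h : Tendsto y atTop (𝓝 L)) :
    ∃ M, ∀ n, |y n| ≤ M := by
  have habs : Tendsto (fun n => |y n|) atTop (𝓝 |L|) := h.abs
  obtain ⟨M, hM⟩ := habs.bddAbove_range
  exact ⟨M, fun n => hM ⟨n, rfl⟩⟩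

lemma supNorm_smul (a : ℝ) (z : ℕ → ℝ) (hz : ∃ M, ∀ n, |z n| ≤ M) :
    supNorm (fun n => a * z n) = |a| * supNorm z := by
  rcases eq_or_ne a 0 with rfl | ha
  · simp [supNorm]
  obtain ⟨M, hM⟩ := hz
  have hbz : ∃ M', ∀ n, |(fun n => a * z n) n| ≤ M' :=
    ⟨|a| * M, fun n => by rw [abs_mul]; exact mul_le_mul_of_nonneg_left (hM n) (abs_nonneg a)⟩
  have hap : 0 < |a| := abs_pos.mpr ha
  apply le_antisymm
  · apply supNorm_le
    intro n
    rw [abs_mul]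
    exact mul_le_mul_of_nonneg_left (le_supNorm ⟨M, hM⟩ n) (abs_nonneg a)
  · rw [mul_comm, ← le_div_iff₀ hap]
    apply supNorm_le
    intro n
    rw [le_div_iff₀ hap]
    calc |z n| * |a| = |a * z n| := by rw [abs_mul, mul_comm]
    _ ≤ supNorm (fun n => a * z n) := le_supNorm hbz n

noncomputable def coordC (m : ℕ) : ℕ → ℝ
  | n => (1 + ∑ k ∈ (Finset.range n).attach, |hMat m n k.1| * coordC m k.1) / hMat m n n
  decreasing_by exact Finset.mem_range.mp k.2

lemma coordC_eq (m n : ℕ) :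
    coordC m n = (1 + ∑ k ∈ Finset.range n, |hMat m n k| * coordC m k) / hMat m n n := by
  rw [coordC]
  congr 2
  exact Finset.sum_attach _ (fun k => |hMat m n k| * coordC m k)

lemma coordC_nonneg (m n : ℕ) : 0 ≤ coordC m n := by
  induction n using Nat.strong_induction_on with
  | _ n ih =>
    rw [coordC_eq]
    apply div_nonneg _ (hMat_diag_pos m n).le
    have : 0 ≤ ∑ k ∈ Finset.range n, |hMat m n k| * coordC m k :=
      Finset.sum_nonneg fun k hk =>
        mul_nonneg (abs_nonneg _) (ih k (Finset.mem_range.mp hk))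
    linarith

lemma coord_bound (m : ℕ) (x : ℕ → ℝ) (hb : ∃ M, ∀ n, |hTrans m x n| ≤ M) (n : ℕ) :
    |x n| ≤ coordC m n * supNorm (hTrans m x) := by
  induction n using Nat.strong_induction_on with
  | _ n ih =>
    have key : hMat m n n * x n = hTrans m x n - ∑ k ∈ Finset.range n, hMat m n k * x k := by
      rw [hTrans, Finset.sum_range_succ]; ring
    have h1 : |x n| = |hTrans m x n - ∑ k ∈ Finset.range n, hMat m n k * x k| / hMat m n n := by
      rw [← key, abs_mul, abs_of_pos (hMat_diag_pos m n),
        mul_div_cancel_left₀ _ (hMat_diag_pos m n).ne']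
    rw [h1, coordC_eq, div_mul_eq_mul_div, div_le_div_iff_of_pos_right (hMat_diag_pos m n)]
    calc |hTrans m x n - ∑ k ∈ Finset.range n, hMat m n k * x k|
        ≤ |hTrans m x n| + |∑ k ∈ Finset.range n, hMat m n k * x k| := abs_sub _ _
      _ ≤ supNorm (hTrans m x) + ∑ k ∈ Finset.range n, |hMat m n k| * (coordC m k * supNorm (hTrans m x)) := by
          gcongr
          · exact le_supNorm hb n
          · calc |∑ k ∈ Finset.range n, hMat m n k * x k|
                ≤ ∑ k ∈ Finset.range n, |hMat m n k * x k| := Finset.abs_sum_le_sum_abs _ _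
              _ ≤ ∑ k ∈ Finset.range n, |hMat m n k| * (coordC m k * supNorm (hTrans m x)) := by
                  apply Finset.sum_le_sum
                  intro k hk
                  rw [abs_mul]
                  exact mul_le_mul_of_nonneg_left (ih k (Finset.mem_range.mp hk)) (abs_nonneg _)
      _ = (1 + ∑ k ∈ Finset.range n, |hMat m n k| * coordC m k) * supNorm (hTrans m x) := by
          rw [add_mul, one_mul, Finset.sum_mul]
          congr 1
          exact Finset.sum_congr rfl fun k _ => by ring

lemma linf_bdd : ∀ y ∈ linfSeq, ∃ M, ∀ n, |y n| ≤ M := fun _ h => h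
lemma c0_bdd : ∀ y ∈ c0Seq, ∃ M, ∀ n, |y n| ≤ M := fun _ h => bdd_of_tendsto h
lemma c_bdd : ∀ y ∈ cSeq, ∃ M, ∀ n, |y n| ≤ M := fun _ ⟨_, h⟩ => bdd_of_tendsto h

lemma linf_closed : ∀ (v : ℕ → ℕ → ℝ) (Y : ℕ → ℝ), (∀ i, v i ∈ linfSeq) →
    (∀ ε : ℝ, 0 < ε → ∃ I : ℕ, ∀ i ≥ I, ∀ n, |v i n - Y n| ≤ ε) → Y ∈ linfSeq := by
  intro v Y hv hunif
  obtain ⟨I, hI⟩ := hunif 1 one_pos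
  obtain ⟨M, hM⟩ := hv I
  refine ⟨M + 1, fun n => ?_⟩
  calc |Y n| = |v I n - (v I n - Y n)| := by ring_nf
    _ ≤ |v I n| + |v I n - Y n| := abs_sub _ _
    _ ≤ M + 1 := add_le_add (hM n) (hI I le_rfl n)

lemma c0_closed : ∀ (v : ℕ → ℕ → ℝ) (Y : ℕ → ℝ), (∀ i, v i ∈ c0Seq) →
    (∀ ε : ℝ, 0 < ε → ∃ I : ℕ, ∀ i ≥ I, ∀ n, |v i n - Y n| ≤ ε) → Y ∈ c0Seq := by
  intro v Y hv hunif
  rw [c0Seq, Set.mem_setOf_eq, Metric.tendsto_atTop]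
  intro ε hε
  obtain ⟨I, hI⟩ := hunif (ε / 3) (by linarith)
  have hvI := hv I
  rw [c0Seq, Set.mem_setOf_eq, Metric.tendsto_atTop] at hvI
  obtain ⟨N, hN⟩ := hvI (ε / 3) (by linarith)
  refine ⟨N, fun n hn => ?_⟩
  have h1 := hI I le_rfl n
  have h2 := hN n hn
  rw [Real.dist_eq, sub_zero] at h2 ⊢
  calc |Y n| = |v I n - (v I n - Y n)| := by ring_nf
    _ ≤ |v I n| + |v I n - Y n| := abs_sub _ _
    _ < ε := by linarith

lemma c_closed : ∀ (v : ℕ → ℕ → ℝ) (Y : ℕ → ℝ), (∀ i, v i ∈ cSeq) →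
    (∀ ε : ℝ, 0 < ε → ∃ I : ℕ, ∀ i ≥ I, ∀ n, |v i n - Y n| ≤ ε) → Y ∈ cSeq := by
  intro v Y hv hunif
  choose L hL using hv
  have hLc : CauchySeq L := by
    rw [Metric.cauchySeq_iff]
    intro ε hε
    obtain ⟨I, hI⟩ := hunif (ε / 3) (by linarith)
    refine ⟨I, fun p hp q hq => ?_⟩
    rw [Real.dist_eq]
    have hlim : Tendsto (fun n => |v p n - v q n|) atTop (𝓝 |L p - L q|) :=
      ((hL p).sub (hL q)).abs
    have hb : |L p - L q| ≤ ε / 3 + ε / 3 := by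
      refine le_of_tendsto hlim (Eventually.of_forall fun n => ?_)
      calc |v p n - v q n| = |(v p n - Y n) - (v q n - Y n)| := by ring_nf
        _ ≤ |v p n - Y n| + |v q n - Y n| := abs_sub _ _
        _ ≤ ε / 3 + ε / 3 := add_le_add (hI p hp n) (hI q hq n)
    linarith
  obtain ⟨LL, hLL⟩ := cauchySeq_tendsto_of_complete hLc
  refine ⟨LL, ?_⟩
  rw [Metric.tendsto_atTop]
  intro ε hε
  obtain ⟨I₁, hI₁⟩ := hunif (ε / 3) (by linarith)
  rw [Metric.tendsto_atTop] at hLL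
  obtain ⟨I₂, hI₂⟩ := hLL (ε / 3) (by linarith)
  set i := max I₁ I₂
  have h1 : ∀ n, |v i n - Y n| ≤ ε / 3 := hI₁ i (le_max_left _ _)
  have h2 : |L i - LL| < ε / 3 := by
    have := hI₂ i (le_max_right _ _); rwa [Real.dist_eq] at this
  have hvi := hL i
  rw [Metric.tendsto_atTop] at hvi
  obtain ⟨N, hN⟩ := hvi (ε / 3) (by linarith)
  refine ⟨N, fun n hn => ?_⟩
  have h3 : |v i n - L i| < ε / 3 := by
    have := hN n hn; rwa [Real.dist_eq] at this
  rw [Real.dist_eq]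
  calc |Y n - LL| = |(-(v i n - Y n)) + (v i n - L i) + (L i - LL)| := by ring_nf
    _ ≤ |(-(v i n - Y n)) + (v i n - L i)| + |L i - LL| := abs_add_le _ _
    _ ≤ |(-(v i n - Y n))| + |v i n - L i| + |L i - LL| := by
        have := abs_add_le (-(v i n - Y n)) (v i n - L i); linarith
    _ < ε := by rw [abs_neg]; have := h1 n; linarith

lemma master (m : ℕ) (T : Set (ℕ → ℝ))
    (hT0 : ∀ y ∈ T, ∃ M, ∀ n, |y n| ≤ M)
    (hTcl : ∀ (v : ℕ → ℕ → ℝ) (Y : ℕ → ℝ), (∀ i, v i ∈ T) →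
      (∀ ε : ℝ, 0 < ε → ∃ I : ℕ, ∀ i ≥ I, ∀ n, |v i n - Y n| ≤ ε) → Y ∈ T) :
    IsBKSpace {x | hTrans m x ∈ T} (hNorm m) := by
  have hbd : ∀ x ∈ {x | hTrans m x ∈ T}, ∃ M, ∀ n, |hTrans m x n| ≤ M :=
    fun x hx => hT0 _ hx
  refine ⟨fun x _ => supNorm_nonneg _, ?_, ?_, ?_, ?_, ?_⟩
  · -- norm zero implies zero
    intro x hx h0
    refine hTrans_zero_eq m x fun n => ?_
    have := le_supNorm (hbd x hx) n
    rw [hNorm] at h0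
    rw [h0] at this
    exact abs_eq_zero.mp (le_antisymm this (abs_nonneg _))
  · -- smul
    intro x hx a
    have : hTrans m (a • x) = fun n => a * hTrans m x n := funext (hTrans_smul m x a)
    rw [hNorm, hNorm, this, supNorm_smul a _ (hbd x hx)]
  · -- add
    intro x hx y hy
    refine supNorm_le fun n => ?_
    rw [hTrans_add]
    calc |hTrans m x n + hTrans m y n| ≤ |hTrans m x n| + |hTrans m y n| := abs_add_le _ _
      _ ≤ hNorm m x + hNorm m y := add_le_add (le_supNorm (hbd x hx) n) (le_supNorm (hbd y hy) n)
  · -- completeness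
    intro u hu hcau
    set y : ℕ → ℕ → ℝ := fun i => hTrans m (u i) with hy
    have hb : ∀ i, ∃ M, ∀ n, |y i n| ≤ M := fun i => hT0 _ (hu i)
    have hbsub : ∀ p q, ∃ M, ∀ n, |y p n - y q n| ≤ M := by
      intro p q
      obtain ⟨Mp, hp⟩ := hb p; obtain ⟨Mq, hq⟩ := hb q
      exact ⟨Mp + Mq, fun n => (abs_sub _ _).trans (add_le_add (hp n) (hq n))⟩
    have hNsub : ∀ p q, hNorm m (u p - u q) = supNorm (fun n => y p n - y q n) := by
      intro p q
      rw [hNorm]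
      congr 1
      exact funext fun n => hTrans_sub m (u p) (u q) n
    have hptC : ∀ n, CauchySeq fun i => y i n := by
      intro n
      rw [Metric.cauchySeq_iff]
      intro ε hε
      obtain ⟨I, hI⟩ := hcau ε hε
      refine ⟨I, fun p hp q hq => ?_⟩
      rw [Real.dist_eq]
      calc |y p n - y q n| ≤ supNorm (fun n => y p n - y q n) := le_supNorm (hbsub p q) n
        _ = hNorm m (u p - u q) := (hNsub p q).symm
        _ < ε := hI p hp q hq
    choose Y hY using fun n => cauchySeq_tendsto_of_complete (hptC n)
    have hunif : ∀ ε : ℝ, 0 < ε → ∃ I : ℕ, ∀ i ≥ I, ∀ n, |y i n - Y n| ≤ ε := by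
      intro ε hε
      obtain ⟨I, hI⟩ := hcau (ε / 2) (by linarith)
      refine ⟨I, fun i hi n => ?_⟩
      have hlim : Tendsto (fun q => |y i n - y q n|) atTop (𝓝 |y i n - Y n|) :=
        ((tendsto_const_nhds.sub (hY n)).abs)
      have : |y i n - Y n| ≤ ε / 2 := by
        refine le_of_tendsto hlim ?_
        filter_upwards [eventually_ge_atTop I] with q hq
        calc |y i n - y q n| ≤ supNorm (fun n => y i n - y q n) := le_supNorm (hbsub i q) n
          _ = hNorm m (u i - u q) := (hNsub i q).symm
          _ ≤ ε / 2 := (hI i hi q hq).le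
      linarith
    refine ⟨invSeq m Y, ?_, ?_⟩
    · show hTrans m (invSeq m Y) ∈ T
      rw [hTrans_invSeq]
      exact hTcl y Y (fun i => hu i) hunif
    · have heq : ∀ i, hNorm m (u i - invSeq m Y) = supNorm (fun n => y i n - Y n) := by
        intro i
        rw [hNorm]
        congr 1
        funext n
        rw [hTrans_sub, hTrans_invSeq]
      rw [Metric.tendsto_atTop]
      intro ε hε
      obtain ⟨I, hI⟩ := hunif (ε / 2) (by linarith)
      refine ⟨I, fun i hi => ?_⟩
      rw [Real.dist_eq, sub_zero, heq i, abs_of_nonneg (supNorm_nonneg _)]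
      have : supNorm (fun n => y i n - Y n) ≤ ε / 2 := supNorm_le (hI i hi)
      linarith
  · -- coordinates
    intro n
    exact ⟨coordC m n, fun x hx => coord_bound m x (hbd x hx) n⟩

end HilbertAux

/-- The spaces `h_0(Δ^(m))`, `h_c(Δ^(m))`, `h_∞(Δ^(m))` are BK-spaces for the norm
`‖x‖ = sup_n |(H^(m) x)_n|`. -/
theorem hilbert_diff_BK (m : ℕ) (hm : 1 ≤ m) :
    IsBKSpace (hZero m) (hNorm m) ∧ IsBKSpace (hConv m) (hNorm m) ∧
      IsBKSpace (hBdd m) (hNorm m) := by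
  exact ⟨master m c0Seq c0_bdd c0_closed, master m cSeq c_bdd c_closed,
    master m linfSeq linf_bdd linf_closed⟩
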